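/- Let Γ be a connected k-regular graph with d+1 distinct eigenvalues k = λ_0 > ⋯ > λ_d and odd-girth at least 2d+1, and let ã_d = Σ_{i=0}^d λ_i. If u and v are vertices at distance d, then (A^{d+1})_{uv} = ã_d · π_0/n. -/

import Mathlib

open SimpleGraph Matrix Finset Polynomial

private lemma pow_mulVec_eig {n : Type*} [Fintype n] [DecidableEq n]
    (A : Matrix n n ℝ) (x : n → ℝ) (μ : ℝ) (hx : A *ᵥ x = μ • x) :
    ∀ m : ℕ, (A ^ m) *ᵥ x = μ ^ m • x := by
  intro m
  induction m with
  | zero => simp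
  | succ m ih =>
    rw [pow_succ, ← mulVec_mulVec, hx, mulVec_smul, ih, smul_smul, mul_comm, ← pow_succ]

private lemma aeval_mulVec_eig {n : Type*} [Fintype n] [DecidableEq n]
    (A : Matrix n n ℝ) (x : n → ℝ) (μ : ℝ) (hx : A *ᵥ x = μ • x) (p : ℝ[X]) :
    (Polynomial.aeval A p) *ᵥ x = p.eval μ • x := by
  induction p using Polynomial.induction_on' with
  | add p q hp hq => simp [add_mulVec, hp, hq, add_smul]
  | monomial m c =>
    rw [Polynomial.aeval_monomial, eval_monomial, Algebra.algebraMap_eq_smul_one,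
      smul_mul_assoc, one_mul, smul_mulVec, pow_mulVec_eig A x μ hx m, smul_smul]

/-- In a connected `k`-regular graph with `d+1` distinct eigenvalues
`k = λ₀ > ⋯ > λ_d` and odd-girth at least `2d+1`, if `u` and `v` are at distance `d`
then `(A^{d+1})_{uv} = ã_d · π₀ / n`, where `ã_d = Σ_{i=0}^d λᵢ` and
`π₀ = ∏_{i=1}^d (k - λᵢ)`. -/
theorem stmt_6 {V : Type*} [Fintype V] [DecidableEq V] (G : SimpleGraph V)
    [DecidableRel G.Adj] (k d : ℕ) (lam : Fin (d + 1) → ℝ)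
    (hconn : G.Connected) (hreg : G.IsRegularOfDegree k)
    (hanti : StrictAnti lam) (h0 : lam 0 = (k : ℝ))
    (hspec : spectrum ℝ (G.adjMatrix ℝ) = Set.range lam)
    (hog : ∀ (u : V) (w : G.Walk u u), w.IsCycle → Odd w.length → 2 * d + 1 ≤ w.length)
    (u v : V) (huv : G.dist u v = d) :
    ((G.adjMatrix ℝ) ^ (d + 1)) u v
      = (∑ i : Fin (d + 1), lam i) *
          (∏ i ∈ Finset.Ioi (0 : Fin (d + 1)), ((k : ℝ) - lam i)) / (Fintype.card V : ℝ) := by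
  set A := G.adjMatrix ℝ with hAdef
  have hA : A.IsHermitian := by
    rw [Matrix.IsHermitian, conjTranspose_eq_transpose_of_trivial]
    exact G.isSymm_adjMatrix
  set p : ℝ[X] := ∏ i : Fin (d + 1), (X - C (lam i)) with hpdef
  set q : ℝ[X] := ∏ i ∈ Finset.Ioi (0 : Fin (d + 1)), (X - C (lam i)) with hqdef
  have hIoi : Finset.Ioi (0 : Fin (d + 1)) = Finset.univ.erase 0 := by
    ext i
    simp [Fin.pos_iff_ne_zero]
  have hpq : p = (X - C (lam 0)) * q := by
    rw [hpdef, hqdef, hIoi]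
    exact (Finset.mul_prod_erase univ _ (mem_univ 0)).symm
  -- p kills A
  have hp0 : (Polynomial.aeval A p : Matrix V V ℝ) = 0 := by
    apply Matrix.toEuclideanLin.injective
    rw [map_zero]
    apply Module.Basis.ext hA.eigenvectorBasis.toBasis
    intro j
    have hx := hA.mulVec_eigenvectorBasis j
    have heval : p.eval (hA.eigenvalues j) = 0 := by
      have hmem : hA.eigenvalues j ∈ Set.range lam := by
        rw [← hspec]; exact hA.eigenvalues_mem_spectrum_real j
      obtain ⟨i, hi⟩ := hmem
      rw [← hi, hpdef, eval_prod]
      exact Finset.prod_eq_zero (mem_univ i) (by simp)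
    have hz : (Polynomial.aeval A p) *ᵥ ⇑(hA.eigenvectorBasis j) = 0 := by
      rw [aeval_mulVec_eig _ _ _ hx, heval, zero_smul]
    have h2 : Matrix.toEuclideanLin (Polynomial.aeval A p) (hA.eigenvectorBasis.toBasis j)
        = (WithLp.equiv 2 (V → ℝ)).symm ((Polynomial.aeval A p) *ᵥ ⇑(hA.eigenvectorBasis j)) := rfl
    rw [h2, hz]
    rfl
  -- q(A) * (A - k) = 0
  have hq0 : (Polynomial.aeval A q) * (A - (k : ℝ) • 1) = 0 := by
    have h3 : Polynomial.aeval A (q * (X - C (lam 0))) = 0 := by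
      rw [mul_comm, ← hpq, hp0]
    rw [_root_.map_mul, map_sub, aeval_X, aeval_C, h0, Algebra.algebraMap_eq_smul_one] at h3
    exact h3
  set M := (Polynomial.aeval A q : Matrix V V ℝ) with hMdef
  -- Laplacian
  have hLap : G.lapMatrix ℝ = (k : ℝ) • 1 - A := by
    ext i j
    by_cases h : i = j <;>
      simp [lapMatrix, degMatrix, Matrix.diagonal, Matrix.one_apply, h, hreg i, hreg j, hAdef]
  have hML : M * G.lapMatrix ℝ = 0 := by
    rw [hLap]
    have h4 : M * ((k : ℝ) • 1 - A) = -(M * (A - (k : ℝ) • 1)) := by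
      rw [mul_sub, mul_sub, neg_sub]
    rw [h4, hq0, neg_zero]
  -- rows of M are constant
  have hrow : ∀ w : V, M u w = M u v := by
    intro w
    have hsym := G.isSymm_lapMatrix (R := ℝ)
    have hLx : G.lapMatrix ℝ *ᵥ (fun y => M u y) = 0 := by
      funext w'
      have h1 : (G.lapMatrix ℝ *ᵥ (fun y => M u y)) w' = (M * G.lapMatrix ℝ) u w' := by
        simp only [mulVec, dotProduct, Matrix.mul_apply]
        refine Finset.sum_congr rfl fun y _ => ?_
        rw [mul_comm]
        congr 1
        exact (congrFun (congrFun hsym w') y).symm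
      rw [h1, hML]
      rfl
    have hc := (G.lapMatrix_mulVec_eq_zero_iff_forall_reachable (x := fun y => M u y)).mp
      hLx
    exact hc w v (hconn.preconnected w v)
  -- row sum
  have h1vec : A *ᵥ (fun _ => (1 : ℝ)) = (k : ℝ) • (fun _ => (1 : ℝ)) := by
    funext w
    simp [hAdef, adjMatrix_mulVec_apply, hreg w]
  have hrowsum : (Fintype.card V : ℝ) * M u v = q.eval (k : ℝ) := by
    have h2 := aeval_mulVec_eig A _ _ h1vec q
    have h3 : (M *ᵥ (fun _ => (1 : ℝ))) u = q.eval (k : ℝ) := by rw [hMdef, h2]; simp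
    rw [← h3]
    simp only [mulVec, dotProduct, mul_one]
    rw [Finset.sum_congr rfl (fun y _ => hrow y)]
    simp [Finset.card_univ, mul_comm]
  have hn : (Fintype.card V : ℝ) ≠ 0 := by
    have : Nonempty V := hconn.nonempty
    exact_mod_cast Fintype.card_ne_zero
  -- entries of powers below d vanish
  have hAzero : ∀ m : ℕ, m < d → (A ^ m) u v = 0 := by
    intro m hm
    rw [hAdef, adjMatrix_pow_apply_eq_card_walk]
    have hE : IsEmpty { p : G.Walk u v | p.length = m } := by
      constructor
      rintro ⟨w, hw⟩
      have hd := SimpleGraph.dist_le w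
      simp only [Set.mem_setOf_eq] at hw
      omega
    rw [Fintype.card_eq_zero]
    norm_num
  -- q is monic of degree d
  have hqmonic : q.Monic := monic_prod_of_monic _ _ (fun i _ => monic_X_sub_C _)
  have hqdeg : q.natDegree = d := by
    rw [hqdef, natDegree_prod _ _ (fun i _ => X_sub_C_ne_zero _)]
    simp only [natDegree_X_sub_C, Finset.sum_const, smul_eq_mul, mul_one]
    rw [hIoi, Finset.card_erase_of_mem (mem_univ 0), Finset.card_univ]
    simp
  have hpmonic : p.Monic := monic_prod_of_monic _ _ (fun i _ => monic_X_sub_C _)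
  have hpdeg : p.natDegree = d + 1 := by
    rw [hpdef, natDegree_prod _ _ (fun i _ => X_sub_C_ne_zero _)]
    simp
  -- M u v = (A^d) u v
  have hMentry : M u v = (A ^ d) u v := by
    have h5 := congrFun (congrFun (Polynomial.aeval_eq_sum_range (p := q) A) u) v
    rw [hqdeg] at h5
    rw [hMdef, h5, Matrix.sum_apply]
    rw [Finset.sum_eq_single_of_mem d (by simp)]
    · have hc1 : q.coeff d = 1 := by rw [← hqdeg]; exact hqmonic.coeff_natDegree
      simp [hc1]
    · intro i hi hne
      have : i < d := by simp at hi; omega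
      simp [hAzero i this]
  -- p coefficient identity at (u,v)
  have hpentry : (0 : ℝ) = p.coeff d * (A ^ d) u v + (A ^ (d + 1)) u v := by
    have h5 := congrFun (congrFun (Polynomial.aeval_eq_sum_range (p := p) A) u) v
    rw [hpdeg, hp0] at h5
    rw [Matrix.sum_apply, Finset.sum_range_succ] at h5
    rw [Finset.sum_eq_single_of_mem d (by simp)] at h5
    · have hc1 : p.coeff (d + 1) = 1 := by rw [← hpdeg]; exact hpmonic.coeff_natDegree
      simpa [hc1] using h5
    · intro i hi hne
      have : i < d := by simp at hi; omega
      simp [hAzero i this]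
  have hcoeff : p.coeff d = -(∑ i : Fin (d + 1), lam i) := by
    have h6 : p.nextCoeff = -(∑ i : Fin (d + 1), lam i) := by
      rw [hpdef, prod_X_sub_C_nextCoeff]
    rwa [Polynomial.nextCoeff_of_natDegree_pos (by rw [hpdeg]; omega), hpdeg,
      Nat.add_sub_cancel] at h6
  have hqk : q.eval (k : ℝ) = ∏ i ∈ Finset.Ioi (0 : Fin (d + 1)), ((k : ℝ) - lam i) := by
    rw [hqdef, eval_prod]
    simp
  have hAd : (A ^ d) u v = (∏ i ∈ Finset.Ioi (0 : Fin (d + 1)), ((k : ℝ) - lam i))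
      / (Fintype.card V : ℝ) := by
    rw [← hMentry, eq_div_iff hn, mul_comm, hrowsum, hqk]
  have := hpentry
  rw [hcoeff, hAd] at this
  rw [mul_div_assoc]
  linarith
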